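/- For even n, the cochain φ_n(a_0,...,a_n) := ⟨a_0[D,a_1],...,[D,a_n]⟩ is a Hochschild cocycle: bφ_n = 0. In particular bφ_2 = 0. -/

import Mathlib

/-- Merge the `j`-th and `(j+1)`-st entries of a tuple by multiplication. -/
def mergeAt {A : Type*} [Mul A] {n : ℕ} (j : Fin (n + 1)) (a : Fin (n + 2) → A) :
    Fin (n + 1) → A := fun i =>
  if (i : ℕ) < (j : ℕ) then a i.castSucc
  else if (i : ℕ) = (j : ℕ) then a i.castSucc * a i.succ
  else a i.succ

/-- The Hochschild cochain `φ_{m+1}(a_0,…,a_{m+1}) = ⟨a_0[D,a_1],[D,a_2],…,[D,a_{m+1}]⟩`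
associated to a family of brackets `br` and the operator `D`. -/
noncomputable def phiCochain {H : Type*} [NormedAddCommGroup H] [InnerProductSpace ℂ H]
    (D : H →L[ℂ] H) (br : ∀ n : ℕ, (Fin n → (H →L[ℂ] H)) → ℂ) (m : ℕ)
    (a : Fin (m + 2) → (H →L[ℂ] H)) : ℂ :=
  br (m + 1) (fun i : Fin (m + 1) =>
    if i = 0 then a 0 * (D * a 1 - a 1 * D) else D * a i.succ - a i.succ * D)

namespace BPhiAux

open Fin.NatCast

lemma mod_small {x m : ℕ} (h : x < m) : x % m = x := Nat.mod_eq_of_lt h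

lemma mod_big {x m : ℕ} (h1 : m ≤ x) (h2 : x < 2 * m) : x % m = x - m := by
  rw [Nat.mod_eq_sub_mod h1, Nat.mod_eq_of_lt (by omega)]

variable {H : Type*} [NormedAddCommGroup H] [InnerProductSpace ℂ H]

/-- commutator -/
noncomputable def dd (D x : H →L[ℂ] H) : H →L[ℂ] H := D * x - x * D

/-- The entries of the basic cyclic bracket `C = ⟨a₀[D,a₁],[D,a₂],…,[D,a_N]⟩`. -/
noncomputable def cE (D : H →L[ℂ] H) (k : ℕ) (a : Fin (2 * k + 4) → (H →L[ℂ] H)) :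
    Fin (2 * k + 3) → (H →L[ℂ] H) :=
  fun p => if p = 0 then a 0 * dd D (a 1) else dd D (a p.succ)

/-- rotated entries -/
noncomputable def VE (D : H →L[ℂ] H) (k : ℕ) (a : Fin (2 * k + 4) → (H →L[ℂ] H))
    (j : Fin (2 * k + 3)) : Fin (2 * k + 2) → (H →L[ℂ] H) :=
  fun i => cE D k a (j + 1 + i.castSucc)

/-- entries of the `j`-th term of `bφ` -/
noncomputable def FE (D : H →L[ℂ] H) (k : ℕ) (a : Fin (2 * k + 4) → (H →L[ℂ] H))
    (j : Fin (2 * k + 3)) : Fin (2 * k + 2) → (H →L[ℂ] H) :=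
  fun i => if i = 0 then mergeAt j a 0 * dd D (mergeAt j a 1)
    else dd D (mergeAt j a i.succ)

/-- the position `j - 1` inside the bracket, where the merged product sits -/
def pos (k : ℕ) (j : Fin (2 * k + 3)) : Fin (2 * k + 2) :=
  ⟨(j : ℕ) - 1, by have := j.isLt; omega⟩

noncomputable def AvalE (D : H →L[ℂ] H) (k : ℕ) (a : Fin (2 * k + 4) → (H →L[ℂ] H))
    (j : Fin (2 * k + 3)) : H →L[ℂ] H :=
  cE D k a ⟨(j : ℕ) - 1, by have := j.isLt; omega⟩ * a j.succ

noncomputable def BvalE (D : H →L[ℂ] H) (k : ℕ) (a : Fin (2 * k + 4) → (H →L[ℂ] H))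
    (j : Fin (2 * k + 3)) : H →L[ℂ] H :=
  (if (j : ℕ) = 1 then a 0 * a 1 else a j.castSucc) * dd D (a j.succ)

variable (bracket : ∀ n : ℕ, MultilinearMap ℂ (fun _ : Fin n => H →L[ℂ] H) ℂ)

noncomputable def AT (D : H →L[ℂ] H) (k : ℕ) (a : Fin (2 * k + 4) → (H →L[ℂ] H))
    (j : Fin (2 * k + 3)) : ℂ :=
  bracket (2 * k + 2) (Function.update (VE D k a j) (Fin.last (2 * k + 1))
    (VE D k a j (Fin.last (2 * k + 1)) * a j.succ))

noncomputable def LT (D : H →L[ℂ] H) (k : ℕ) (a : Fin (2 * k + 4) → (H →L[ℂ] H))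
    (j : Fin (2 * k + 3)) : ℂ :=
  bracket (2 * k + 2) (Function.update (VE D k a j) 0 (a j.succ * VE D k a j 0))

noncomputable def CC (D : H →L[ℂ] H) (k : ℕ) (a : Fin (2 * k + 4) → (H →L[ℂ] H)) : ℂ :=
  bracket (2 * k + 3) (cE D k a)

noncomputable def WT (D : H →L[ℂ] H) (k : ℕ) (a : Fin (2 * k + 4) → (H →L[ℂ] H))
    (m : ℕ) : ℂ :=
  AT bracket D k a ((m : ℕ) : Fin (2 * k + 3))

lemma AT_eq_WT (D : H →L[ℂ] H) (k : ℕ) (a : Fin (2 * k + 4) → (H →L[ℂ] H))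
    (j : Fin (2 * k + 3)) (m : ℕ) (h : (j : ℕ) = m) :
    AT bracket D k a j = WT bracket D k a m := by
  unfold WT
  congr 1
  apply Fin.ext
  rw [Fin.val_natCast, Nat.mod_eq_of_lt (by have := j.isLt; omega)]
  omega

/-- rotation invariance by any amount -/
lemma rot
    (hcycl : ∀ (n : ℕ) (V : Fin (n + 1) → (H →L[ℂ] H)),
      bracket (n + 1) V = bracket (n + 1) (fun i => V (i + 1)))
    (n : ℕ) (V : Fin (n + 1) → (H →L[ℂ] H)) (r : ℕ) :
    bracket (n + 1) V = bracket (n + 1) (fun i => V ((r : Fin (n + 1)) + i)) := by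
  induction r with
  | zero => simp
  | succ r ih =>
      rw [ih, hcycl n (fun i => V ((r : Fin (n + 1)) + i))]
      congr 1; funext i; congr 1; push_cast; abel

section Main

variable (D : H →L[ℂ] H) (k : ℕ) (a : Fin (2 * k + 4) → (H →L[ℂ] H))

/-- Leibniz split -/
lemma split (j : Fin (2 * k + 3)) (hj : (j : ℕ) ≠ 0) :
    bracket (2 * k + 2) (FE D k a j) =
      bracket (2 * k + 2) (Function.update (FE D k a j) (pos k j) (AvalE D k a j)) +
      bracket (2 * k + 2) (Function.update (FE D k a j) (pos k j) (BvalE D k a j)) := by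
  have hval : FE D k a j (pos k j) = AvalE D k a j + BvalE D k a j := by
    rcases eq_or_ne (j : ℕ) 1 with hj1 | hj1
    · have e1 : j = 1 := by
        apply Fin.ext
        rw [hj1]
        simp [Fin.val_one]
      subst e1
      have c0 : ((1 : Fin (2 * k + 3)) : ℕ) = 1 := by simp
      have hp0 : pos k 1 = 0 := by apply Fin.ext; simp [pos, c0]
      rw [hp0]
      simp only [FE, mergeAt, AvalE, BvalE, pos, cE]
      have hcs0 : (0 : Fin (2 * k + 3)).castSucc = (0 : Fin (2 * k + 4)) := by
        apply Fin.ext; simp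
      have hcs1 : (1 : Fin (2 * k + 3)).castSucc = (1 : Fin (2 * k + 4)) := by
        apply Fin.ext; simp [c0]
      rw [if_pos (show ((0 : Fin (2*k+3)) : ℕ) < ((1 : Fin (2*k+3)) : ℕ) from by
        simp [c0])]
      rw [if_neg (lt_irrefl ((1 : Fin (2*k+3)) : ℕ))]
      rw [if_pos (show (⟨((1 : Fin (2*k+3)) : ℕ) - 1,
            by have := (1 : Fin (2*k+3)).isLt; omega⟩ : Fin (2*k+3)) = 0 from by
        apply Fin.ext; simp [c0])]
      rw [if_pos c0]
      simp only [if_true]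
      rw [hcs0, hcs1]
      unfold dd
      noncomm_ring
    · have hj2 : 2 ≤ (j : ℕ) := by omega
      have hposval : ((pos k j) : ℕ) = (j : ℕ) - 1 := rfl
      have hposne : pos k j ≠ 0 := by
        simp only [Ne, Fin.ext_iff, Fin.val_zero, hposval]
        omega
      have hsuccval : ((pos k j).succ : ℕ) = (j : ℕ) := by
        simp only [Fin.val_succ, hposval]; omega
      simp only [FE, mergeAt, AvalE, BvalE, cE, if_neg hposne]
      rw [if_neg (by omega : ¬ ((pos k j).succ : ℕ) < (j : ℕ))]
      rw [if_pos hsuccval]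
      have hne0 : (⟨(j : ℕ) - 1, by have := j.isLt; omega⟩ : Fin (2*k+3)) ≠ 0 := by
        simp only [Ne, Fin.ext_iff, Fin.val_zero]
        omega
      rw [if_neg hne0, if_neg hj1]
      have e1 : a (pos k j).succ.castSucc = a j.castSucc := by
        congr 1
        apply Fin.ext
        simp only [Fin.coe_castSucc, hsuccval]
      have e2 : a (pos k j).succ.succ = a j.succ := by
        congr 1
        apply Fin.ext
        simp only [Fin.val_succ, hposval]
        omega
      have e3 : a (⟨(j : ℕ) - 1, by have := j.isLt; omega⟩ : Fin (2*k+3)).succ = a j.castSucc := by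
        congr 1
        apply Fin.ext
        simp only [Fin.val_succ, Fin.coe_castSucc]
        omega
      rw [e1, e2, e3]
      unfold dd
      noncomm_ring
  calc bracket (2 * k + 2) (FE D k a j)
      = bracket (2 * k + 2) (Function.update (FE D k a j) (pos k j)
          (AvalE D k a j + BvalE D k a j)) := by rw [← hval, Function.update_eq_self]
    _ = _ := (bracket (2 * k + 2)).map_update_add (FE D k a j) (pos k j) _ _

/-- off-position entries of `FE` are entries of `cE`, skipping index `j` -/
lemma FE_eq (j : Fin (2 * k + 3)) (hj : (j : ℕ) ≠ 0) (m : Fin (2 * k + 2))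
    (hm : (m : ℕ) ≠ (j : ℕ) - 1) :
    FE D k a j m =
      if (m : ℕ) < (j : ℕ) - 1 then cE D k a m.castSucc else cE D k a m.succ := by
  have c1 : ((1 : Fin (2 * k + 3)) : ℕ) = 1 := by simp
  rcases eq_or_ne m 0 with rfl | hm0
  · have hj2 : 2 ≤ (j : ℕ) := by
      simp only [Fin.val_zero] at hm
      omega
    simp only [FE, mergeAt, cE, eq_self_iff_true, if_true]
    rw [if_pos (show ((0 : Fin (2*k+3)) : ℕ) < (j : ℕ) from by
      simp only [Fin.val_zero]; omega)]
    rw [if_pos (show ((1 : Fin (2*k+3)) : ℕ) < (j : ℕ) from by rw [c1]; omega)]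
    rw [if_pos (show ((0 : Fin (2*k+2)) : ℕ) < (j : ℕ) - 1 from by
      simp only [Fin.val_zero]; omega)]
    have e0 : (0 : Fin (2 * k + 2)).castSucc = (0 : Fin (2 * k + 3)) := by
      apply Fin.ext; simp
    rw [e0, if_pos rfl]
    have e1 : a ((0 : Fin (2 * k + 3)).castSucc) = a 0 := by
      congr 1 <;> (apply Fin.ext; simp)
    have e2 : a ((1 : Fin (2 * k + 3)).castSucc) = a 1 := by
      congr 1 <;> (apply Fin.ext; simp [c1])
    rw [e1, e2]
  · have hm1 : 1 ≤ (m : ℕ) := by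
      rcases Nat.eq_zero_or_pos (m : ℕ) with h | h
      · exact absurd (Fin.ext h) hm0
      · omega
    simp only [FE, mergeAt, cE, if_neg hm0]
    rcases Nat.lt_or_ge ((m : ℕ) + 1) (j : ℕ) with h1 | h1
    · rw [if_pos (show ((m.succ : Fin (2*k+3)) : ℕ) < (j : ℕ) from by
        simpa [Fin.val_succ] using h1)]
      rw [if_pos (show (m : ℕ) < (j : ℕ) - 1 from by omega)]
      rw [if_neg (show (m.castSucc : Fin (2*k+3)) ≠ 0 from by
        simp only [Ne, Fin.ext_iff, Fin.coe_castSucc, Fin.val_zero]; omega)]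
      congr 1 <;> (apply Fin.ext; simp)
    · have h2 : (j : ℕ) < (m : ℕ) + 1 := by omega
      rw [if_neg (show ¬ ((m.succ : Fin (2*k+3)) : ℕ) < (j : ℕ) from by
        simp only [Fin.val_succ]; omega)]
      rw [if_neg (show ¬ ((m.succ : Fin (2*k+3)) : ℕ) = (j : ℕ) from by
        simp only [Fin.val_succ]; omega)]
      rw [if_neg (show ¬ (m : ℕ) < (j : ℕ) - 1 from by omega)]
      rw [if_neg (show (m.succ : Fin (2*k+3)) ≠ 0 from (Fin.succ_ne_zero m))]

/-- rotation of the A-part -/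
lemma A_rot
    (hcycl : ∀ (n : ℕ) (V : Fin (n + 1) → (H →L[ℂ] H)),
      bracket (n + 1) V = bracket (n + 1) (fun i => V (i + 1)))
    (j : Fin (2 * k + 3)) (hj : (j : ℕ) ≠ 0) :
    bracket (2 * k + 2) (Function.update (FE D k a j) (pos k j) (AvalE D k a j)) =
      AT bracket D k a j := by
  have c1 : ((1 : Fin (2 * k + 3)) : ℕ) = 1 := by simp
  have hj1 : 1 ≤ (j : ℕ) := by omega
  have hjlt : (j : ℕ) < 2 * k + 3 := j.isLt
  have hrot : bracket (2 * k + 2) (Function.update (FE D k a j) (pos k j) (AvalE D k a j))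
      = bracket (2 * k + 2) (fun i =>
          Function.update (FE D k a j) (pos k j) (AvalE D k a j)
            (((j : ℕ) : Fin (2 * k + 2)) + i)) :=
    rot bracket hcycl (2 * k + 1) _ (j : ℕ)
  rw [hrot]
  simp only [AT]
  congr 1
  funext i
  rw [Function.update_apply, Function.update_apply]
  rcases eq_or_ne i (Fin.last (2 * k + 1)) with rfl | hilast
  · rw [if_pos rfl]
    have hm : ((((j : ℕ) : Fin (2 * k + 2))) + Fin.last (2 * k + 1)) = pos k j := by
      apply Fin.ext
      simp only [Fin.val_add, Fin.val_natCast, Fin.val_last, Nat.mod_add_mod, pos]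
      rw [mod_big (by omega) (by omega)]
      omega
    rw [if_pos hm]
    simp only [AvalE, VE]
    have hidx : (⟨(j : ℕ) - 1, by have := j.isLt; omega⟩ : Fin (2 * k + 3))
        = j + 1 + (Fin.last (2 * k + 1)).castSucc := by
      apply Fin.ext
      simp only [Fin.val_add, Fin.coe_castSucc, Fin.val_last, c1, Nat.mod_add_mod]
      rw [mod_big (by omega) (by omega)]
      omega
    rw [hidx]
  · rw [if_neg hilast]
    have hine : (i : ℕ) < 2 * k + 1 := by
      have := i.isLt
      rcases Nat.lt_or_ge (i : ℕ) (2 * k + 1) with h | h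
      · exact h
      · exact absurd (Fin.ext (by simp only [Fin.val_last]; omega)) hilast
    have hmval : (((((j : ℕ) : Fin (2 * k + 2))) + i : Fin (2 * k + 2)) : ℕ)
        = ((j : ℕ) + (i : ℕ)) % (2 * k + 2) := by
      rw [Fin.val_add, Fin.val_natCast, Nat.mod_add_mod]
    have hmne : ((((j : ℕ) : Fin (2 * k + 2))) + i) ≠ pos k j := by
      simp only [Ne, Fin.ext_iff, hmval, pos]
      rcases Nat.lt_or_ge ((j : ℕ) + (i : ℕ)) (2 * k + 2) with h | h
      · rw [mod_small h]; omega
      · rw [mod_big h (by omega)]; omega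
    rw [if_neg hmne]
    rw [FE_eq D k a j hj _ (by
      rw [hmval]
      rcases Nat.lt_or_ge ((j : ℕ) + (i : ℕ)) (2 * k + 2) with h | h
      · rw [mod_small h]; omega
      · rw [mod_big h (by omega)]; omega)]
    simp only [VE]
    rcases Nat.lt_or_ge ((j : ℕ) + (i : ℕ)) (2 * k + 2) with h | h
    · rw [if_neg (show ¬ (((((j : ℕ) : Fin (2 * k + 2))) + i : Fin (2 * k + 2)) : ℕ)
          < (j : ℕ) - 1 from by rw [hmval, mod_small h]; omega)]
      congr 1
      apply Fin.ext
      simp only [Fin.val_succ, Fin.val_add, Fin.val_natCast, Fin.coe_castSucc, c1,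
        Nat.mod_add_mod]
      rw [mod_small h, mod_small (show (j : ℕ) + 1 + (i : ℕ) < 2 * k + 3 by omega)]
      omega
    · rw [if_pos (show (((((j : ℕ) : Fin (2 * k + 2))) + i : Fin (2 * k + 2)) : ℕ)
          < (j : ℕ) - 1 from by rw [hmval, mod_big h (by omega)]; omega)]
      congr 1
      apply Fin.ext
      simp only [Fin.coe_castSucc, Fin.val_add, Fin.val_natCast, c1, Nat.mod_add_mod]
      rw [mod_big h (by omega),
        mod_big (show 2 * k + 3 ≤ (j : ℕ) + 1 + (i : ℕ) by omega) (by omega)]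
      omega

/-- rotation of the B-part -/
lemma B_rot
    (hcycl : ∀ (n : ℕ) (V : Fin (n + 1) → (H →L[ℂ] H)),
      bracket (n + 1) V = bracket (n + 1) (fun i => V (i + 1)))
    (j : Fin (2 * k + 3)) (hj : 2 ≤ (j : ℕ)) :
    bracket (2 * k + 2) (Function.update (FE D k a j) (pos k j) (BvalE D k a j)) =
      LT bracket D k a ⟨(j : ℕ) - 1, by have := j.isLt; omega⟩ := by
  have c1 : ((1 : Fin (2 * k + 3)) : ℕ) = 1 := by simp
  have hjlt : (j : ℕ) < 2 * k + 3 := j.isLt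
  have hjne0 : j ≠ 0 := by
    simp only [Ne, Fin.ext_iff, Fin.val_zero]; omega
  have hrot : bracket (2 * k + 2) (Function.update (FE D k a j) (pos k j) (BvalE D k a j))
      = bracket (2 * k + 2) (fun i =>
          Function.update (FE D k a j) (pos k j) (BvalE D k a j)
            ((((j : ℕ) - 1 : ℕ) : Fin (2 * k + 2)) + i)) :=
    rot bracket hcycl (2 * k + 1) _ ((j : ℕ) - 1)
  rw [hrot]
  simp only [LT]
  congr 1
  funext i
  rw [Function.update_apply, Function.update_apply]
  rcases eq_or_ne i 0 with rfl | hi0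
  · rw [if_pos rfl]
    have hm : (((((j : ℕ) - 1 : ℕ)) : Fin (2 * k + 2)) + (0 : Fin (2 * k + 2))) = pos k j := by
      apply Fin.ext
      simp only [Fin.val_add, Fin.val_natCast, Fin.val_zero, Nat.mod_add_mod, pos]
      rw [mod_small (by omega)]
      omega
    rw [if_pos hm]
    simp only [BvalE, VE]
    rw [if_neg (show ¬ (j : ℕ) = 1 from by omega)]
    have hidx : (⟨(j : ℕ) - 1, by have := j.isLt; omega⟩ : Fin (2 * k + 3)) + 1
        + (0 : Fin (2 * k + 2)).castSucc = j := by
      apply Fin.ext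
      simp only [Fin.val_add, Fin.coe_castSucc, Fin.val_zero, c1, Nat.mod_add_mod]
      rw [mod_small (by omega)]
      omega
    rw [hidx]
    simp only [cE, if_neg hjne0]
    rw [show a ((⟨(j : ℕ) - 1, by have := j.isLt; omega⟩ : Fin (2 * k + 3)).succ)
        = a j.castSucc from by
      congr 1 <;> (apply Fin.ext; simp only [Fin.val_succ, Fin.coe_castSucc]; omega)]
  · rw [if_neg hi0]
    have hi1 : 1 ≤ (i : ℕ) := by
      rcases Nat.eq_zero_or_pos (i : ℕ) with h | h
      · exact absurd (Fin.ext h) hi0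
      · omega
    have hilt : (i : ℕ) < 2 * k + 2 := i.isLt
    have hmval : ((((((j : ℕ) - 1 : ℕ)) : Fin (2 * k + 2)) + i : Fin (2 * k + 2)) : ℕ)
        = ((j : ℕ) - 1 + (i : ℕ)) % (2 * k + 2) := by
      rw [Fin.val_add, Fin.val_natCast, Nat.mod_add_mod]
    have hmne : (((((j : ℕ) - 1 : ℕ)) : Fin (2 * k + 2)) + i) ≠ pos k j := by
      simp only [Ne, Fin.ext_iff, hmval, pos]
      rcases Nat.lt_or_ge ((j : ℕ) - 1 + (i : ℕ)) (2 * k + 2) with h | h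
      · rw [mod_small h]; omega
      · rw [mod_big h (by omega)]; omega
    rw [if_neg hmne]
    rw [FE_eq D k a j (by omega) _ (by
      rw [hmval]
      rcases Nat.lt_or_ge ((j : ℕ) - 1 + (i : ℕ)) (2 * k + 2) with h | h
      · rw [mod_small h]; omega
      · rw [mod_big h (by omega)]; omega)]
    simp only [VE]
    rcases Nat.lt_or_ge ((j : ℕ) - 1 + (i : ℕ)) (2 * k + 2) with h | h
    · rw [if_neg (show ¬ (((((((j : ℕ) - 1 : ℕ)) : Fin (2 * k + 2)) + i : Fin (2 * k + 2))) : ℕ)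
          < (j : ℕ) - 1 from by rw [hmval, mod_small h]; omega)]
      congr 1
      apply Fin.ext
      simp only [Fin.val_succ, Fin.val_add, Fin.val_natCast, Fin.coe_castSucc, c1,
        Nat.mod_add_mod]
      rw [mod_small h, mod_small (show (j : ℕ) - 1 + 1 + (i : ℕ) < 2 * k + 3 by omega)]
      omega
    · rw [if_pos (show (((((j : ℕ) - 1 : ℕ) : Fin (2 * k + 2)) + i : Fin (2 * k + 2)) : ℕ)
          < (j : ℕ) - 1 from by rw [hmval, mod_big h (by omega)]; omega)]
      congr 1
      apply Fin.ext
      simp only [Fin.coe_castSucc, Fin.val_add, Fin.val_natCast, c1, Nat.mod_add_mod]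
      rw [mod_big h (by omega),
        mod_big (show 2 * k + 3 ≤ (j : ℕ) - 1 + 1 + (i : ℕ) by omega) (by omega)]
      omega

/-- the correcting bracket is `C`, for `j ≠ 0` -/
lemma LT_sub_AT (A : Subalgebra ℂ (H →L[ℂ] H))
    (hcycl : ∀ (n : ℕ) (V : Fin (n + 1) → (H →L[ℂ] H)),
      bracket (n + 1) V = bracket (n + 1) (fun i => V (i + 1)))
    (hcomm : ∀ (n : ℕ) (V : Fin (n + 1) → (H →L[ℂ] H)) (a : H →L[ℂ] H), a ∈ A →
      bracket (n + 1) (Function.update V 0 (a * V 0)) -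
        bracket (n + 1) (Function.update V (Fin.last n) (V (Fin.last n) * a)) =
      bracket (n + 2) (Fin.snoc V (D * a - a * D)))
    (ha : ∀ i, a i ∈ A)
    (j : Fin (2 * k + 3)) (hj : (j : ℕ) ≠ 0) :
    LT bracket D k a j - AT bracket D k a j = CC bracket D k a := by
  have c1 : ((1 : Fin (2 * k + 3)) : ℕ) = 1 := by simp
  have hjne : j ≠ 0 := by
    simp only [Ne, Fin.ext_iff, Fin.val_zero]; exact hj
  have hsnoc : (Fin.snoc (VE D k a j) (D * a j.succ - a j.succ * D) : Fin (2*k+3) → _)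
      = fun i => cE D k a (j + 1 + i) := by
    funext i
    refine Fin.lastCases ?_ (fun i => ?_) i
    · rw [Fin.snoc_last]
      have hidx : j + 1 + Fin.last (2 * k + 2) = j := by
        apply Fin.ext
        simp only [Fin.val_add, Fin.val_last, c1]
        rcases Nat.lt_or_ge ((j : ℕ) + 1) (2 * k + 3) with h | h
        · rw [Nat.mod_eq_of_lt h,
            show (j : ℕ) + 1 + (2 * k + 2) = (j : ℕ) + (2 * k + 3) from by omega,
            Nat.add_mod_right, Nat.mod_eq_of_lt j.isLt]
        · have hj2 : (j : ℕ) = 2 * k + 2 := by have := j.isLt; omega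
          rw [mod_big h (by have := j.isLt; omega), hj2,
            show 2 * k + 2 + 1 - (2 * k + 3) + (2 * k + 2) = 2 * k + 2 from by omega,
            Nat.mod_eq_of_lt (by omega)]
      rw [hidx]
      simp only [cE, if_neg hjne]
      rfl
    · rw [Fin.snoc_castSucc]
      rfl
  have h2 : bracket (2 * k + 3) (Fin.snoc (VE D k a j) (D * a j.succ - a j.succ * D))
      = CC bracket D k a := by
    rw [hsnoc]
    have hrot : bracket (2 * k + 3) (cE D k a)
        = bracket (2 * k + 3) (fun i => cE D k a ((((j : ℕ) + 1 : ℕ)) + i)) :=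
      rot bracket hcycl (2 * k + 2) (cE D k a) ((j : ℕ) + 1)
    simp only [CC]
    rw [hrot]
    congr 1
  exact (hcomm (2 * k + 1) (VE D k a j) (a j.succ) (ha j.succ)).trans h2

/-- the `j = 0` term coincides with the B-part of the `j = 1` term -/
lemma zero_term :
    FE D k a 0 = Function.update (FE D k a 1) (pos k 1) (BvalE D k a 1) := by
  have c1 : ((1 : Fin (2 * k + 3)) : ℕ) = 1 := by simp
  have cz : ((0 : Fin (2 * k + 3)) : ℕ) = 0 := rfl
  have hp0 : pos k 1 = 0 := by apply Fin.ext; simp [pos, c1]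
  funext i
  rw [hp0, Function.update_apply]
  rcases eq_or_ne i 0 with rfl | hi
  · rw [if_pos rfl]
    simp only [FE, mergeAt, BvalE, if_true]
    rw [if_neg (lt_irrefl ((0 : Fin (2*k+3)) : ℕ))]
    rw [if_neg (by simp only [c1, cz]; omega : ¬ ((1 : Fin (2*k+3)) : ℕ) < ((0 : Fin (2*k+3)) : ℕ))]
    rw [if_neg (by simp only [c1, cz]; omega : ¬ ((1 : Fin (2*k+3)) : ℕ) = ((0 : Fin (2*k+3)) : ℕ))]
    rw [if_pos c1]
    have h1 : (0 : Fin (2 * k + 3)).castSucc = (0 : Fin (2 * k + 4)) := by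
      apply Fin.ext; simp
    have h2 : (0 : Fin (2 * k + 3)).succ = (1 : Fin (2 * k + 4)) := by
      apply Fin.ext; simp
    rw [h1, h2]
  · rw [if_neg hi]
    have hi1 : 1 ≤ (i : ℕ) := by
      rcases Nat.eq_zero_or_pos (i : ℕ) with h | h
      · exact absurd (Fin.ext h) hi
      · omega
    simp only [FE, mergeAt, if_neg hi]
    rw [if_neg (by simp only [cz, Fin.val_succ]; omega : ¬ ((i.succ : Fin (2*k+3)) : ℕ) < ((0 : Fin (2*k+3)) : ℕ))]
    rw [if_neg (by simp only [cz, Fin.val_succ]; omega : ¬ ((i.succ : Fin (2*k+3)) : ℕ) = ((0 : Fin (2*k+3)) : ℕ))]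
    rw [if_neg (by simp only [c1, Fin.val_succ]; omega : ¬ ((i.succ : Fin (2*k+3)) : ℕ) < ((1 : Fin (2*k+3)) : ℕ))]
    rw [if_neg (by simp only [c1, Fin.val_succ]; omega : ¬ ((i.succ : Fin (2*k+3)) : ℕ) = ((1 : Fin (2*k+3)) : ℕ))]

/-- the wrap-around term of `bφ` coincides with `LT` at the last index -/
lemma last_term :
    (fun i : Fin (2 * k + 2) =>
        if i = 0 then
          (if (0 : Fin (2 * k + 3)) = 0 then a (Fin.last (2 * k + 3)) * a 0
              else a (0 : Fin (2*k+3)).castSucc) *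
            (D * (if (1 : Fin (2 * k + 3)) = 0 then a (Fin.last (2 * k + 3)) * a 0
              else a (1 : Fin (2*k+3)).castSucc) -
             (if (1 : Fin (2 * k + 3)) = 0 then a (Fin.last (2 * k + 3)) * a 0
              else a (1 : Fin (2*k+3)).castSucc) * D)
        else
          D * (if i.succ = 0 then a (Fin.last (2 * k + 3)) * a 0 else a i.succ.castSucc) -
            (if i.succ = 0 then a (Fin.last (2 * k + 3)) * a 0 else a i.succ.castSucc) * D) =
      Function.update (VE D k a (Fin.last (2 * k + 2))) 0
        (a (Fin.last (2 * k + 2)).succ * VE D k a (Fin.last (2 * k + 2)) 0) := by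
  have c1 : ((1 : Fin (2 * k + 3)) : ℕ) = 1 := by simp
  have h1ne : (1 : Fin (2 * k + 3)) ≠ 0 := by
    simp only [Ne, Fin.ext_iff, Fin.val_zero, c1]; omega
  funext i
  rw [Function.update_apply]
  rcases eq_or_ne i 0 with rfl | hi
  · simp only [eq_self_iff_true, if_true]
    simp only [if_neg h1ne]
    simp only [VE]
    have hidx : Fin.last (2 * k + 2) + 1 + (0 : Fin (2 * k + 2)).castSucc
        = (0 : Fin (2 * k + 3)) := by
      apply Fin.ext
      simp [Fin.val_add, Fin.val_last, c1]
    rw [hidx]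
    simp only [cE, eq_self_iff_true, if_true]
    have e1 : a (Fin.last (2 * k + 3)) = a ((Fin.last (2 * k + 2)).succ) := by
      congr 1 <;> (apply Fin.ext; simp)
    have e2 : a ((1 : Fin (2 * k + 3)).castSucc) = a (1 : Fin (2 * k + 4)) := by
      congr 1 <;> (apply Fin.ext; simp [c1])
    rw [e1, e2]
    unfold dd
    noncomm_ring
  · have hi' : (i : ℕ) ≠ 0 := fun h => hi (Fin.ext h)
    simp only [if_neg hi, if_neg (Fin.succ_ne_zero i)]
    simp only [VE]
    have hidx : Fin.last (2 * k + 2) + 1 + i.castSucc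
        = (⟨(i : ℕ), by have := i.isLt; omega⟩ : Fin (2 * k + 3)) := by
      apply Fin.ext
      simp only [Fin.val_add, Fin.val_last, c1, Fin.coe_castSucc]
      rw [show 2 * k + 2 + 1 = 2 * k + 3 from rfl]
      rw [Nat.mod_self, Nat.zero_add, Nat.mod_eq_of_lt (by have := i.isLt; omega)]
    rw [hidx]
    simp only [cE]
    rw [if_neg (show (⟨(i : ℕ), by have := i.isLt; omega⟩ : Fin (2 * k + 3)) ≠ 0 from by
      simp only [Ne, Fin.ext_iff, Fin.val_zero]; exact hi')]
    have e3 : a ((⟨(i : ℕ), by have := i.isLt; omega⟩ : Fin (2 * k + 3)).succ)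
        = a (i.succ.castSucc) := by
      congr 1 <;> (apply Fin.ext; simp)
    rw [e3]
    rfl

end Main

end BPhiAux

/-- For even `n = 2k+2`, the cochain `φ_n` is a Hochschild cocycle: `bφ_n = 0`. -/
theorem b_phi_even_eq_zero
    {H : Type*} [NormedAddCommGroup H] [InnerProductSpace ℂ H] [CompleteSpace H]
    (A : Subalgebra ℂ (H →L[ℂ] H)) (D : H →L[ℂ] H) (hD : IsSelfAdjoint D)
    (bracket : ∀ n : ℕ, MultilinearMap ℂ (fun _ : Fin n => H →L[ℂ] H) ℂ)
    (hcycl : ∀ (n : ℕ) (V : Fin (n + 1) → (H →L[ℂ] H)),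
      bracket (n + 1) V = bracket (n + 1) (fun i => V (i + 1)))
    (hcomm : ∀ (n : ℕ) (V : Fin (n + 1) → (H →L[ℂ] H)) (a : H →L[ℂ] H), a ∈ A →
      bracket (n + 1) (Function.update V 0 (a * V 0)) -
        bracket (n + 1) (Function.update V (Fin.last n) (V (Fin.last n) * a)) =
      bracket (n + 2) (Fin.snoc V (D * a - a * D)))
    (k : ℕ) (a : Fin (2 * k + 4) → (H →L[ℂ] H)) (ha : ∀ i, a i ∈ A) :
    (∑ j : Fin (2 * k + 3),
        (-1 : ℂ) ^ (j : ℕ) *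
          phiCochain D (fun n => ⇑(bracket n)) (2 * k + 1) (mergeAt j a)) +
      (-1 : ℂ) ^ (2 * k + 3) *
        phiCochain D (fun n => ⇑(bracket n)) (2 * k + 1)
          (fun i => if i = 0 then a (Fin.last (2 * k + 3)) * a 0 else a i.castSucc) = 0 := by
  classical
  open BPhiAux in
  have c1 : ((1 : Fin (2 * k + 3)) : ℕ) = 1 := by simp
  have e01 : (0 : Fin (2 * k + 2)).succ = (1 : Fin (2 * k + 3)) := by
    apply Fin.ext; simp
  have hphi : ∀ j : Fin (2 * k + 3),
      phiCochain D (fun n => ⇑(bracket n)) (2 * k + 1) (mergeAt j a)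
        = bracket (2 * k + 2) (FE D k a j) := fun _ => rfl
  have hlastphi : phiCochain D (fun n => ⇑(bracket n)) (2 * k + 1)
      (fun i => if i = 0 then a (Fin.last (2 * k + 3)) * a 0 else a i.castSucc)
      = LT bracket D k a (Fin.last (2 * k + 2)) :=
    congrArg (⇑(bracket (2 * k + 2))) (last_term D k a)
  rw [Fin.sum_univ_succ, Fin.sum_univ_succ, hlastphi]
  -- the generic terms
  have hterm : ∀ i : Fin (2 * k + 1),
      (-1 : ℂ) ^ ((i.succ.succ : Fin (2 * k + 3)) : ℕ) *
        phiCochain D (fun n => ⇑(bracket n)) (2 * k + 1) (mergeAt i.succ.succ a)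
      = (-1 : ℂ) ^ ((i : ℕ) + 2) * (WT bracket D k a ((i : ℕ) + 2) +
          (WT bracket D k a ((i : ℕ) + 1) + CC bracket D k a)) := by
    intro i
    have h2 : ((i.succ.succ : Fin (2 * k + 3)) : ℕ) = (i : ℕ) + 2 := rfl
    rw [hphi]
    rw [split bracket D k a i.succ.succ (by rw [h2]; omega)]
    rw [A_rot bracket D k a hcycl i.succ.succ (by rw [h2]; omega)]
    rw [B_rot bracket D k a hcycl i.succ.succ (by rw [h2]; omega)]
    rw [show (⟨((i.succ.succ : Fin (2 * k + 3)) : ℕ) - 1,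
          by have := (i.succ.succ : Fin (2 * k + 3)).isLt; omega⟩ : Fin (2 * k + 3))
        = (i.succ.castSucc : Fin (2 * k + 3)) from by
      apply Fin.ext
      show ((i.succ.succ : Fin (2 * k + 3)) : ℕ) - 1 = (i.succ.castSucc : ℕ)
      simp only [Fin.val_succ, Fin.coe_castSucc]
      omega]
    rw [eq_add_of_sub_eq (LT_sub_AT bracket D k a A hcycl hcomm ha i.succ.castSucc
      (by simp))]
    rw [AT_eq_WT bracket D k a i.succ.succ ((i : ℕ) + 2) h2]
    rw [AT_eq_WT bracket D k a i.succ.castSucc ((i : ℕ) + 1) (by simp)]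
    rw [h2]
    ring
  rw [Finset.sum_congr rfl (fun i _ => hterm i)]
  -- the telescoping sum
  have hsum : ∑ i : Fin (2 * k + 1), ((-1 : ℂ) ^ ((i : ℕ) + 2) *
      (WT bracket D k a ((i : ℕ) + 2) + (WT bracket D k a ((i : ℕ) + 1)
        + CC bracket D k a)))
      = WT bracket D k a (2 * k + 2) + WT bracket D k a 1 + CC bracket D k a := by
    rw [Fin.sum_univ_eq_sum_range (fun m => (-1 : ℂ) ^ (m + 2) *
      (WT bracket D k a (m + 2) + (WT bracket D k a (m + 1) + CC bracket D k a)))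
      (2 * k + 1)]
    have h2 : ∀ m : ℕ, (-1 : ℂ) ^ (m + 2) * (WT bracket D k a (m + 2) +
        (WT bracket D k a (m + 1) + CC bracket D k a))
        = (((-1 : ℂ) ^ (m + 1 + 1) * WT bracket D k a (m + 1 + 1)) -
            ((-1 : ℂ) ^ (m + 1) * WT bracket D k a (m + 1))) +
          ((-1 : ℂ) ^ m * CC bracket D k a) := by
      intro m
      rw [show m + 1 + 1 = m + 2 from rfl]
      ring
    rw [Finset.sum_congr rfl (fun m _ => h2 m), Finset.sum_add_distrib]
    have h3 := Finset.sum_range_sub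
      (fun m => (-1 : ℂ) ^ (m + 1) * WT bracket D k a (m + 1)) (2 * k + 1)
    rw [h3]
    have h4 : ∑ m ∈ Finset.range (2 * k + 1), ((-1 : ℂ) ^ m * CC bracket D k a)
        = CC bracket D k a := by
      rw [← Finset.sum_mul, neg_one_geom_sum,
        if_neg (by simp [Nat.even_add_one, parity_simps])]
      ring
    rw [h4]
    rw [show 2 * k + 1 + 1 = 2 * k + 2 from rfl]
    rw [Even.neg_one_pow (⟨k + 1, by ring⟩ : Even (2 * k + 2))]
    norm_num
  rw [hsum]
  -- the j = 0 and j = 1 terms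
  rw [e01]
  have h0 : bracket (2 * k + 2) (FE D k a 0)
      = bracket (2 * k + 2) (Function.update (FE D k a 1) (pos k 1) (BvalE D k a 1)) :=
    congrArg _ (zero_term D k a)
  have h1 : bracket (2 * k + 2) (FE D k a 1)
      = WT bracket D k a 1 + bracket (2 * k + 2)
          (Function.update (FE D k a 1) (pos k 1) (BvalE D k a 1)) := by
    rw [split bracket D k a 1 (by rw [c1]; omega)]
    rw [A_rot bracket D k a hcycl 1 (by rw [c1]; omega)]
    rw [AT_eq_WT bracket D k a 1 1 c1]
  rw [hphi 0, hphi 1, h0, h1]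
  -- the last term
  rw [eq_add_of_sub_eq (LT_sub_AT bracket D k a A hcycl hcomm ha (Fin.last (2 * k + 2))
    (by simp))]
  rw [AT_eq_WT bracket D k a (Fin.last (2 * k + 2)) (2 * k + 2) (by simp)]
  -- numerical signs
  rw [show ((0 : Fin (2 * k + 3)) : ℕ) = 0 from rfl, c1]
  rw [Odd.neg_one_pow (⟨k + 1, by ring⟩ : Odd (2 * k + 3))]
  ring
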